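/- Let u ∈ C⁴ in space on (a,b) with u_t sufficiently smooth, satisfying u_t + u_xxxxt = f(u)_x on each subinterval I_n of a partition of (a,b), and suppose additionally that for every test function v ∈ H²₀(I_{k-1} ∪ I_k) one has ∫ u_t v + ∫ u_xxt v_xx = ∫ f(u)_x v over I_{k-1} ∪ I_k. Then the jump of u_xxxt at the shared node x_k vanishes: [u_xxxt(x_k)] = 0. -/

import Mathlib

open intervalIntegral Set

private lemma hasDerivAt_iter {g : ℝ → ℝ} (hg : ContDiff ℝ 4 g) (k : ℕ) (hk : k < 4) (x : ℝ) :
    HasDerivAt (iteratedDeriv k g) (iteratedDeriv (k+1) g x) x := by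
  rw [iteratedDeriv_succ]
  exact ((hg.differentiable_iteratedDeriv k (by exact_mod_cast hk)) x).hasDerivAt

private lemma ibp2 (a b : ℝ) (g v : ℝ → ℝ) (hg : ContDiff ℝ 4 g) (hv : ContDiff ℝ 2 v) :
    (∫ x in a..b, iteratedDeriv 2 g x * iteratedDeriv 2 v x)
      = iteratedDeriv 2 g b * deriv v b - iteratedDeriv 2 g a * deriv v a
        - (iteratedDeriv 3 g b * v b - iteratedDeriv 3 g a * v a)
        + ∫ x in a..b, iteratedDeriv 4 g x * v x := by
  have hvd : ∀ x, HasDerivAt (deriv v) (iteratedDeriv 2 v x) x := by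
    intro x
    rw [show (2:ℕ) = 1 + 1 from rfl, iteratedDeriv_succ, iteratedDeriv_one]
    exact ((hv.iterate_deriv' 1 1).differentiable (by simp) x).hasDerivAt
  have hvv : ∀ x, HasDerivAt v (deriv v x) x :=
    fun x => ((hv.differentiable (by norm_num)) x).hasDerivAt
  have c2g : Continuous (iteratedDeriv 2 g) := hg.continuous_iteratedDeriv 2 (by norm_num)
  have c3g : Continuous (iteratedDeriv 3 g) := hg.continuous_iteratedDeriv 3 (by norm_num)
  have c4g : Continuous (iteratedDeriv 4 g) := hg.continuous_iteratedDeriv 4 (by norm_num)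
  have c2v : Continuous (iteratedDeriv 2 v) := hv.continuous_iteratedDeriv 2 (by norm_num)
  have cv : Continuous v := hv.continuous
  have step1 : (∫ x in a..b, iteratedDeriv 2 g x * iteratedDeriv 2 v x)
      = iteratedDeriv 2 g b * deriv v b - iteratedDeriv 2 g a * deriv v a
        - ∫ x in a..b, iteratedDeriv 3 g x * deriv v x :=
    integral_mul_deriv_eq_deriv_mul
      (fun x _ => hasDerivAt_iter hg 2 (by norm_num) x)
      (fun x _ => hvd x)
      (c3g.intervalIntegrable _ _) (c2v.intervalIntegrable _ _)
  have step2 : (∫ x in a..b, iteratedDeriv 3 g x * deriv v x)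
      = iteratedDeriv 3 g b * v b - iteratedDeriv 3 g a * v a
        - ∫ x in a..b, iteratedDeriv 4 g x * v x :=
    integral_mul_deriv_eq_deriv_mul
      (fun x _ => hasDerivAt_iter hg 3 (by norm_num) x)
      (fun x _ => hvv x)
      (c4g.intervalIntegrable _ _) ((hv.continuous_deriv (by norm_num)).intervalIntegrable _ _)
  rw [step1, step2]; ring

/-- Vanishing of the jump `[u_xxxt(x_k)]`: model the (time-differentiated) solution
`g = u_t(·, t)` piecewise by `gL` on `I_{k-1} = (x_{k-1}, x_k)` and `gR` on
`I_k = (x_k, x_{k+1})`, each `C⁴`, matching in `C¹` at the node `x_k` and satisfying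
the strong equation `g + g_xxxx = F` (with `F = f(u)_x`) on the closed subintervals.
If moreover, for every `v ∈ H²₀(I_{k-1} ∪ I_k)` (i.e. `v` of class `C²` vanishing with
its first derivative at `x_{k-1}` and `x_{k+1}`), the weak identity
`∫ g v + ∫ g_xx v_xx = ∫ F v` holds over `I_{k-1} ∪ I_k`, then the jump of the third
derivative of `g` across `x_k` vanishes: `gL'''(x_k) = gR'''(x_k)`. -/
theorem jump_third_derivative_vanishes
    (xkm xk xkp : ℝ) (h1 : xkm < xk) (h2 : xk < xkp)
    (gL gR F : ℝ → ℝ)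
    (hgL : ContDiff ℝ 4 gL) (hgR : ContDiff ℝ 4 gR)
    (hC0 : gL xk = gR xk) (hC1 : deriv gL xk = deriv gR xk)
    (hstrongL : ∀ x ∈ Icc xkm xk, gL x + iteratedDeriv 4 gL x = F x)
    (hstrongR : ∀ x ∈ Icc xk xkp, gR x + iteratedDeriv 4 gR x = F x)
    (hweak : ∀ v : ℝ → ℝ, ContDiff ℝ 2 v →
      v xkm = 0 → v xkp = 0 → deriv v xkm = 0 → deriv v xkp = 0 →
      ((∫ x in xkm..xk, gL x * v x) + (∫ x in xk..xkp, gR x * v x)) +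
        ((∫ x in xkm..xk, iteratedDeriv 2 gL x * iteratedDeriv 2 v x) +
          (∫ x in xk..xkp, iteratedDeriv 2 gR x * iteratedDeriv 2 v x)) =
        (∫ x in xkm..xk, F x * v x) + (∫ x in xk..xkp, F x * v x)) :
    iteratedDeriv 3 gL xk = iteratedDeriv 3 gR xk := by
  -- bump function
  set w : ℝ → ℝ := fun x => (x - xkm)^3 * (xkp - x)^3 with hw
  set w' : ℝ → ℝ := fun x => 3*(x - xkm)^2 * (xkp - x)^3 + (x - xkm)^3 * (3*(xkp - x)^2 * (-1)) with hw'
  have hwd : ∀ x, HasDerivAt w (w' x) x := by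
    intro x
    have h1' : HasDerivAt (fun x : ℝ => (x - xkm)^3) (3*(x - xkm)^2) x := by
      have := ((hasDerivAt_id x).sub_const xkm).fun_pow 3
      simpa using this
    have h2' : HasDerivAt (fun x : ℝ => (xkp - x)^3) (3*(xkp - x)^2 * (-1)) x := by
      have := ((hasDerivAt_id x).const_sub xkp).fun_pow 3
      simpa [mul_comm, mul_assoc, mul_left_comm] using this
    simpa [hw, hw'] using h1'.fun_mul h2'
  have hwkpos : (0:ℝ) < w xk := by
    simp only [hw]
    exact mul_pos (pow_pos (by linarith) 3) (pow_pos (by linarith) 3)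
  have hwk : w xk ≠ 0 := ne_of_gt hwkpos
  set m : ℝ := w' xk / w xk with hm
  set v : ℝ → ℝ := fun x => w x * (1 - m * (x - xk)) with hv
  set v' : ℝ → ℝ := fun x => w' x * (1 - m * (x - xk)) + w x * (-m) with hv'
  have hvd : ∀ x, HasDerivAt v (v' x) x := by
    intro x
    have hq : HasDerivAt (fun x : ℝ => 1 - m * (x - xk)) (-m) x := by
      have := (((hasDerivAt_id x).sub_const xk).const_mul m).const_sub 1
      simpa using this
    simpa [hv, hv'] using (hwd x).fun_mul hq
  have hvderiv : deriv v = v' := funext fun x => (hvd x).deriv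
  have hvC2 : ContDiff ℝ 2 v := by
    apply ContDiff.mul
    · exact (((contDiff_id.sub contDiff_const).pow 3).mul ((contDiff_const.sub contDiff_id).pow 3))
    · exact contDiff_const.sub (contDiff_const.mul (contDiff_id.sub contDiff_const))
  have hwm : w xkm = 0 := by simp [hw]
  have hwp : w xkp = 0 := by simp [hw]
  have hw'm : w' xkm = 0 := by simp [hw']
  have hw'p : w' xkp = 0 := by simp [hw']
  have hv0m : v xkm = 0 := by simp [hv, hwm]
  have hv0p : v xkp = 0 := by simp [hv, hwp]
  have hv1m : deriv v xkm = 0 := by rw [hvderiv]; simp [hv', hw'm, hwm]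
  have hv1p : deriv v xkp = 0 := by rw [hvderiv]; simp [hv', hw'p, hwp]
  have hv1k : deriv v xk = 0 := by
    rw [hvderiv]; simp only [hv']
    field_simp [hm]
    simp
    rw [hm, div_mul_cancel₀ _ hwk]; ring
  have hvk : v xk = w xk := by simp [hv]
  -- strong equation gives: ∫ g v + ∫ g⁗ v = ∫ F v
  have strongInt : ∀ (a b : ℝ) (g : ℝ → ℝ), ContDiff ℝ 4 g → a ≤ b →
      (∀ x ∈ Icc a b, g x + iteratedDeriv 4 g x = F x) →
      (∫ x in a..b, g x * v x) + (∫ x in a..b, iteratedDeriv 4 g x * v x)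
        = ∫ x in a..b, F x * v x := by
    intro a b g hg hab hs
    rw [← integral_add ((hg.continuous.fun_mul hvC2.continuous).intervalIntegrable _ _)
        (((hg.continuous_iteratedDeriv 4 (by norm_num)).fun_mul hvC2.continuous).intervalIntegrable _ _)]
    apply integral_congr
    intro x hx
    rw [uIcc_of_le hab] at hx
    have := hs x hx
    show g x * v x + iteratedDeriv 4 g x * v x = F x * v x
    linear_combination v x * this
  have key := hweak v hvC2 hv0m hv0p hv1m hv1p
  rw [ibp2 xkm xk gL v hgL hvC2, ibp2 xk xkp gR v hgR hvC2] at key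
  rw [hv0m, hv0p, hv1m, hv1p, hv1k] at key
  have eqL := strongInt xkm xk gL hgL h1.le hstrongL
  have eqR := strongInt xk xkp gR hgR h2.le hstrongR
  simp only [mul_zero, zero_mul, sub_zero, zero_sub] at key
  have final : iteratedDeriv 3 gL xk * v xk = iteratedDeriv 3 gR xk * v xk := by
    linarith [key, eqL, eqR]
  rw [hvk] at final
  exact mul_right_cancel₀ hwk final
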